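/- Let $k \ge 1$ and let $G$ be a simple undirected graph on $n \ge 2k+1$ vertices in which every cycle has length exactly $2k+1$. Then the number of cycles in $G$ is at most $\lfloor (n-1)/(2k) \rfloor$. -/

import Mathlib

/-- The edge set of a cycle of length `len = m + 3` in a simple graph `G`:
there is an injective map `f : ZMod (m+3) → V` with consecutive images
adjacent, whose consecutive-pair edges form exactly the finset `s`. -/
def IsCycleEdges {V : Type*} [DecidableEq V] (G : SimpleGraph V)
    (s : Finset (Sym2 V)) (len : ℕ) : Prop :=
  ∃ m : ℕ, len = m + 3 ∧ ∃ f : ZMod (m + 3) → V, Function.Injective f ∧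
    (∀ i, G.Adj (f i) (f (i + 1))) ∧
    s = Finset.image (fun i => s(f i, f (i + 1))) Finset.univ

open SimpleGraph

set_option linter.unusedSectionVars false
set_option maxHeartbeats 1000000

section Aux

variable {V : Type*} [DecidableEq V]

lemma aux_walk_support_eq {G : SimpleGraph V} {u v : V} (p : G.Walk u v) :
    p.support = (List.range (p.length + 1)).map p.getVert := by
  induction p with
  | nil => simp [SimpleGraph.Walk.getVert]
  | cons h q ih =>
    rw [SimpleGraph.Walk.support_cons, SimpleGraph.Walk.length_cons, ih,
      List.range_succ_eq_map (n := q.length + 1)]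
    simp [List.map_map, Function.comp_def, SimpleGraph.Walk.getVert_cons_succ]

lemma aux_walk_edges_eq {G : SimpleGraph V} {u v : V} (p : G.Walk u v) :
    p.edges = (List.range p.length).map (fun i => s(p.getVert i, p.getVert (i + 1))) := by
  induction p with
  | nil => simp
  | cons h q ih =>
    rw [SimpleGraph.Walk.edges_cons, SimpleGraph.Walk.length_cons, ih,
      List.range_succ_eq_map (n := q.length)]
    simp [List.map_map, Function.comp_def, SimpleGraph.Walk.getVert_cons_succ,
      SimpleGraph.Walk.getVert_zero]

lemma aux_isCycle_isCycleEdges {G : SimpleGraph V} {u : V} {c : G.Walk u u}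
    (hc : c.IsCycle) : IsCycleEdges G c.edges.toFinset c.length := by
  have h3 : 3 ≤ c.length := hc.three_le_length
  obtain ⟨m, hm⟩ : ∃ m, c.length = m + 3 := ⟨c.length - 3, by omega⟩
  set L := m + 3 with hL
  haveI : NeZero L := ⟨by omega⟩
  haveI : Fact (1 < L) := ⟨by omega⟩
  have hst : c.support.tail = (List.range L).map (fun i => c.getVert (i + 1)) := by
    rw [aux_walk_support_eq c, ← hm, List.range_succ_eq_map]
    simp [List.map_map, Function.comp_def]
  have hnd : (c.support.tail).Nodup := hc.support_nodup
  rw [hst] at hnd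
  have hinj1 : ∀ a b : ℕ, a < L → b < L → c.getVert (a + 1) = c.getVert (b + 1) → a = b := by
    intro a b ha hb hab
    exact List.inj_on_of_nodup_map hnd (List.mem_range.mpr ha) (List.mem_range.mpr hb) hab
  have hgv0 : c.getVert L = c.getVert 0 := by
    rw [← hm, SimpleGraph.Walk.getVert_length, SimpleGraph.Walk.getVert_zero]
  refine ⟨m, hm, fun i => c.getVert i.val, ?_, ?_, ?_⟩
  · have key2 : ∀ a b : ℕ, a < L → b < L → c.getVert a = c.getVert b → a = b := by
      intro a b ha hb hab
      set a' := if a = 0 then L else a with ha'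
      set b' := if b = 0 then L else b with hb'
      have bd1 : 1 ≤ a' ∧ a' ≤ L := by
        by_cases h : a = 0 <;> simp [ha', h] <;> omega
      have bd2 : 1 ≤ b' ∧ b' ≤ L := by
        by_cases h : b = 0 <;> simp [hb', h] <;> omega
      have e1 : c.getVert a' = c.getVert a := by
        by_cases h : a = 0 <;> simp [ha', h, hgv0]
      have e2 : c.getVert b' = c.getVert b := by
        by_cases h : b = 0 <;> simp [hb', h, hgv0]
      have heq : a' - 1 = b' - 1 := by
        apply hinj1 _ _ (by omega) (by omega)
        rw [show a' - 1 + 1 = a' from by omega, show b' - 1 + 1 = b' from by omega]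
        exact e1.trans (hab.trans e2.symm)
      have hab' : a' = b' := by omega
      by_cases h1 : a = 0 <;> by_cases h2 : b = 0 <;>
        simp [ha', hb', h1, h2] at hab' <;> omega
    intro i j hij
    simp only at hij
    exact ZMod.val_injective L (key2 _ _ (ZMod.val_lt i) (ZMod.val_lt j) hij)
  · intro i
    show G.Adj (c.getVert i.val) (c.getVert ((i + 1).val))
    have hi : i.val < L := ZMod.val_lt i
    have hval : (i + 1).val = (i.val + 1) % L := by
      rw [ZMod.val_add, ZMod.val_one]
    have hadj : G.Adj (c.getVert i.val) (c.getVert (i.val + 1)) :=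
      c.adj_getVert_succ (by omega)
    rcases Nat.lt_or_ge (i.val + 1) L with h | h
    · rwa [hval, Nat.mod_eq_of_lt h]
    · have : (i.val + 1) % L = 0 := by
        have : i.val + 1 = L := by omega
        simp [this]
      have h1 : i.val + 1 = L := by omega
      rw [hval, this, ← hgv0, ← h1]
      exact hadj
  · have key : ∀ a : ℕ, a < L →
        s(c.getVert a, c.getVert ((a + 1) % L)) = s(c.getVert a, c.getVert (a + 1)) := by
      intro a ha
      rcases Nat.lt_or_ge (a + 1) L with h | h
      · rw [Nat.mod_eq_of_lt h]
      · have h1 : a + 1 = L := by omega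
        have : (a + 1) % L = 0 := by simp [h1]
        rw [this, ← hgv0, h1]
    ext e
    simp only [List.mem_toFinset, Finset.mem_image, Finset.mem_univ, true_and,
      aux_walk_edges_eq c, List.mem_map, List.mem_range, ← hm]
    constructor
    · rintro ⟨a, ha, rfl⟩
      rw [hm] at ha
      refine ⟨(a : ZMod L), ?_⟩
      have hval : ((a : ZMod L)).val = a := ZMod.val_cast_of_lt ha
      have hval1 : ((a : ZMod L) + 1).val = (a + 1) % L := by
        rw [ZMod.val_add, ZMod.val_one, hval]
      rw [hval, hval1, key a ha]
    · rintro ⟨i, rfl⟩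
      have hi : i.val < L := ZMod.val_lt i
      refine ⟨i.val, by omega, ?_⟩
      have hval1 : (i + 1).val = (i.val + 1) % L := by
        rw [ZMod.val_add, ZMod.val_one]
      rw [hval1, key i.val hi]

lemma aux_isCycleEdges_mono {G H : SimpleGraph V} (hGH : G ≤ H) {s : Finset (Sym2 V)} {len : ℕ}
    (h : IsCycleEdges G s len) : IsCycleEdges H s len := by
  obtain ⟨m, hm, f, hf, hadj, hs⟩ := h
  exact ⟨m, hm, f, hf, fun i => hGH (hadj i), hs⟩

lemma aux_isCycleEdges_mem_edgeSet {G : SimpleGraph V} {s : Finset (Sym2 V)} {len : ℕ}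
    (h : IsCycleEdges G s len) : ∀ e ∈ s, e ∈ G.edgeSet := by
  obtain ⟨m, hm, f, hf, hadj, rfl⟩ := h
  intro e he
  simp only [Finset.mem_image, Finset.mem_univ, true_and] at he
  obtain ⟨i, rfl⟩ := he
  exact hadj i

lemma aux_isCycleEdges_card {G : SimpleGraph V} {s : Finset (Sym2 V)} {len : ℕ}
    (h : IsCycleEdges G s len) : s.card = len := by
  obtain ⟨m, hm, f, hf, hadj, rfl⟩ := h
  haveI : NeZero (m + 3) := ⟨by omega⟩
  have hinj : Function.Injective (fun i : ZMod (m + 3) => s(f i, f (i + 1))) := by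
    intro i j hij
    simp only [Sym2.eq_iff] at hij
    rcases hij with ⟨h1, h2⟩ | ⟨h1, h2⟩
    · exact hf h1
    · exfalso
      have e1 : i = j + 1 := hf h1
      have e2 : i + 1 = j := hf h2
      have h2' : ((2 : ℕ) : ZMod (m + 3)) = 0 := by push_cast; linear_combination e2 - e1
      have := Nat.le_of_dvd (by norm_num) ((ZMod.natCast_eq_zero_iff 2 (m + 3)).mp h2')
      omega
  rw [Finset.card_image_of_injective _ hinj, Finset.card_univ, ZMod.card, hm]

lemma aux_isCycleEdges_even_deg {G : SimpleGraph V} {s : Finset (Sym2 V)} {len : ℕ}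
    (h : IsCycleEdges G s len) (v : V) :
    Even ((s.filter (fun e => v ∈ e)).card) := by
  obtain ⟨m, hm, f, hf, hadj, rfl⟩ := h
  haveI : NeZero (m + 3) := ⟨by omega⟩
  by_cases hv : ∃ i, f i = v
  · obtain ⟨i0, rfl⟩ := hv
    have hpair : (Finset.image (fun i : ZMod (m+3) => s(f i, f (i + 1))) Finset.univ).filter
        (fun e => f i0 ∈ e) = {s(f (i0 - 1), f i0), s(f i0, f (i0 + 1))} := by
      ext e
      simp only [Finset.mem_filter, Finset.mem_image, Finset.mem_univ, true_and,
        Finset.mem_insert, Finset.mem_singleton]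
      constructor
      · rintro ⟨⟨j, rfl⟩, hmem⟩
        rw [Sym2.mem_iff] at hmem
        rcases hmem with h1 | h1
        · right
          rw [hf h1.symm]
        · left
          have hji : j = i0 - 1 := by
            have h5 : j + 1 = i0 := hf h1.symm
            linear_combination h5
          subst hji
          rw [show i0 - 1 + 1 = i0 from by ring]
      · rintro (rfl | rfl)
        · refine ⟨⟨i0 - 1, by rw [show i0 - 1 + 1 = i0 from by ring]⟩, ?_⟩
          rw [Sym2.mem_iff]; right; rfl
        · exact ⟨⟨i0, rfl⟩, by rw [Sym2.mem_iff]; left; rfl⟩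
    have hne : s(f (i0 - 1), f i0) ≠ s(f i0, f (i0 + 1)) := by
      intro h1
      rw [Sym2.eq_iff] at h1
      rcases h1 with ⟨h1, h2⟩ | ⟨h1, h2⟩
      · have e1 : i0 - 1 = i0 := hf h1
        have h2' : ((1 : ℕ) : ZMod (m + 3)) = 0 := by push_cast; linear_combination -e1
        have := Nat.le_of_dvd (by norm_num) ((ZMod.natCast_eq_zero_iff 1 (m + 3)).mp h2')
        omega
      · have e1 : i0 - 1 = i0 + 1 := hf h1
        have h2' : ((2 : ℕ) : ZMod (m + 3)) = 0 := by push_cast; linear_combination -e1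
        have := Nat.le_of_dvd (by norm_num) ((ZMod.natCast_eq_zero_iff 2 (m + 3)).mp h2')
        omega
    rw [hpair, Finset.card_insert_of_notMem (by simpa using hne), Finset.card_singleton]
    exact ⟨1, rfl⟩
  · push_neg at hv
    have hemp : (Finset.image (fun i : ZMod (m+3) => s(f i, f (i + 1))) Finset.univ).filter
        (fun e => v ∈ e) = ∅ := by
      ext e
      simp only [Finset.mem_filter, Finset.mem_image, Finset.mem_univ, true_and,
        Finset.notMem_empty, iff_false, not_and]
      rintro ⟨j, rfl⟩ hmem
      rw [Sym2.mem_iff] at hmem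
      rcases hmem with h1 | h1
      · exact hv j h1.symm
      · exact hv (j + 1) h1.symm
    rw [hemp]
    simp

lemma aux_acyclic_sup_edge {H : SimpleGraph V} (hH : H.IsAcyclic) {u v : V} (hne : u ≠ v)
    (hreach : ¬H.Reachable u v) : (H ⊔ SimpleGraph.edge u v).IsAcyclic := by
  intro w c hc
  by_cases he : s(u, v) ∈ c.edges
  · have hadj' : (H ⊔ SimpleGraph.edge u v).Adj u v := by
      rw [sup_adj, edge_adj]
      exact Or.inr ⟨Or.inl ⟨rfl, rfl⟩, hne⟩
    have hbridge : (H ⊔ SimpleGraph.edge u v).IsBridge s(u, v) := by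
      rw [isBridge_iff]
      · intro hr
        apply hreach
        refine hr.mono ?_
        intro a b hab
        rw [deleteEdges, sdiff_adj] at hab
        obtain ⟨hab1, hab2⟩ := hab
        rw [sup_adj] at hab1
        rcases hab1 with h | h
        · exact h
        · exact absurd (by rwa [SimpleGraph.edge] at h) hab2
    exact ((isBridge_iff_forall_cycle_notMem hadj').mp hbridge c hc) he
  · have hsub : ∀ e ∈ c.edges, e ∈ H.edgeSet := by
      intro e hce
      have hmem := c.edges_subset_edgeSet hce
      rw [edgeSet_sup, edge_edgeSet_of_ne hne] at hmem
      rcases hmem with h | h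
      · exact h
      · rw [Set.mem_singleton_iff] at h
        exact absurd (h ▸ hce) he
    exact hH (c.transfer H hsub) (hc.transfer hsub)

lemma aux_acyclic_ncard [Fintype V] [Nonempty V] {H : SimpleGraph V} (hH : H.IsAcyclic) :
    H.edgeSet.ncard ≤ Fintype.card V - 1 := by
  classical
  have hbound : ∀ K : SimpleGraph V, K.edgeSet.ncard ≤ Fintype.card (Sym2 V) := by
    intro K
    calc K.edgeSet.ncard ≤ (Set.univ : Set (Sym2 V)).ncard :=
          Set.ncard_le_ncard (Set.subset_univ _) Set.finite_univ
    _ = Fintype.card (Sym2 V) := by rw [Set.ncard_univ, Nat.card_eq_fintype_card]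
  have hconncase : ∀ K : SimpleGraph V, K.IsAcyclic → K.Connected →
      K.edgeSet.ncard ≤ Fintype.card V - 1 := by
    intro K hK hconn
    have htree : K.IsTree := ⟨hconn, hK⟩
    have h1 := htree.card_edgeFinset
    rw [Set.ncard_eq_toFinset_card' K.edgeSet]
    rw [edgeFinset] at h1
    omega
  have step : ∀ K : SimpleGraph V, K.IsAcyclic → ¬K.Connected →
      ∃ K' : SimpleGraph V, K'.IsAcyclic ∧ K'.edgeSet.ncard = K.edgeSet.ncard + 1 := by
    intro K hK hconn
    have hpre : ¬K.Preconnected := by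
      intro hp
      exact hconn (connected_iff K |>.mpr ⟨hp, ‹Nonempty V›⟩)
    rw [Preconnected] at hpre
    push_neg at hpre
    obtain ⟨a, b, hab⟩ := hpre
    have hne : a ≠ b := by rintro rfl; exact hab (Reachable.refl a)
    have hnadj : ¬K.Adj a b := fun h => hab h.reachable
    refine ⟨K ⊔ SimpleGraph.edge a b, aux_acyclic_sup_edge hK hne hab, ?_⟩
    rw [edgeSet_sup, edge_edgeSet_of_ne hne, Set.union_singleton,
      Set.ncard_insert_of_notMem (by rwa [mem_edgeSet]) (Set.toFinite _)]
  suffices h : ∀ j (K : SimpleGraph V), K.IsAcyclic →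
      Fintype.card (Sym2 V) - K.edgeSet.ncard ≤ j → K.edgeSet.ncard ≤ Fintype.card V - 1 by
    exact h _ H hH le_rfl
  intro j
  induction j with
  | zero =>
    intro K hK hj
    by_cases hconn : K.Connected
    · exact hconncase K hK hconn
    · obtain ⟨K', _, hcard⟩ := step K hK hconn
      have := hbound K'
      have := hbound K
      omega
  | succ n ih =>
    intro K hK hj
    by_cases hconn : K.Connected
    · exact hconncase K hK hconn
    · obtain ⟨K', hK', hcard⟩ := step K hK hconn
      have h1 := hbound K'
      have h2 := ih K' hK' (by omega)
      omega

lemma aux_deg_eq [Fintype V] {F : Finset (Sym2 V)} (hd : ∀ e ∈ F, ¬e.IsDiag) (x : V) :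
    ((fromEdgeSet (↑F : Set (Sym2 V))).neighborSet x).ncard
      = (F.filter (fun e => x ∈ e)).card := by
  classical
  rw [Set.ncard_eq_toFinset_card']
  apply Finset.card_bij (fun y _ => s(x, y))
  · intro a ha
    rw [Set.mem_toFinset, mem_neighborSet, fromEdgeSet_adj] at ha
    rw [Finset.mem_filter]
    exact ⟨ha.1, Sym2.mem_iff.mpr (Or.inl rfl)⟩
  · intro a _ b _ hab
    exact Sym2.congr_right.mp hab
  · intro e hef
    rw [Finset.mem_filter] at hef
    obtain ⟨heF, hx⟩ := hef
    obtain ⟨y, rfl⟩ := Sym2.mem_iff_exists.mp hx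
    have hxy : x ≠ y := fun h => hd _ heF (Sym2.mk_isDiag_iff.mpr h)
    refine ⟨y, ?_, rfl⟩
    rw [Set.mem_toFinset, mem_neighborSet, fromEdgeSet_adj]
    exact ⟨heF, hxy⟩

lemma aux_even_not_acyclic [Fintype V] {F : Finset (Sym2 V)} (hd : ∀ e ∈ F, ¬e.IsDiag)
    (hne : F.Nonempty) (heven : ∀ v, Even ((F.filter (fun e => v ∈ e)).card)) :
    ¬(fromEdgeSet (↑F : Set (Sym2 V))).IsAcyclic := by
  classical
  intro hacyc
  obtain ⟨e, he⟩ := hne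
  revert he
  induction e using Sym2.ind with
  | _ u v =>
  intro he
  have hne' : u ≠ v := fun h => hd _ he (Sym2.mk_isDiag_iff.mpr h)
  have hadj : (fromEdgeSet (↑F : Set (Sym2 V))).Adj u v := (fromEdgeSet_adj _).mpr ⟨he, hne'⟩
  have hbridge := isAcyclic_iff_forall_adj_isBridge.mp hacyc hadj
  rw [isBridge_iff] at hbridge
  have hreach := hbridge
  have hH'' : (fromEdgeSet (↑F : Set (Sym2 V))) \ fromEdgeSet {s(u, v)}
      = fromEdgeSet (↑(F.erase s(u, v)) : Set (Sym2 V)) := by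
    ext a b
    simp only [sdiff_adj, fromEdgeSet_adj, Finset.coe_erase, Set.mem_diff, Finset.mem_coe,
      Set.mem_singleton_iff, Finset.mem_erase]
    tauto
  set H'' := (fromEdgeSet (↑F : Set (Sym2 V))) \ fromEdgeSet {s(u, v)} with hH''def
  set A : Set V := {x | H''.Reachable u x} with hA
  have huA : u ∈ A := Reachable.refl u
  have hvA : v ∉ A := fun hv => hreach hv
  have hclosed : ∀ x y, x ∈ A → H''.Adj x y → y ∈ A := by
    intro x y hx hxy
    exact hx.trans hxy.reachable
  set K : SimpleGraph V :=
    { Adj := fun x y => H''.Adj x y ∧ x ∈ A ∧ y ∈ A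
      symm := by
        constructor
        intro x y ⟨h1, h2, h3⟩
        exact ⟨h1.symm, h3, h2⟩
      loopless := by
        constructor
        intro x ⟨h1, _, _⟩
        exact h1.ne rfl } with hK
  have hdegA : ∀ x, x ∈ A → K.degree x = ((F.erase s(u, v)).filter (fun e => x ∈ e)).card := by
    intro x hx
    have h1 : K.neighborFinset x = H''.neighborFinset x := by
      ext y
      rw [mem_neighborFinset, mem_neighborFinset]
      constructor
      · rintro ⟨h, -, -⟩; exact h
      · intro h; exact ⟨h, hx, hclosed x y hx h⟩
    rw [← card_neighborFinset_eq_degree, h1]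
    have h2 : (H''.neighborFinset x).card = (H''.neighborSet x).ncard := by
      rw [Set.ncard_eq_toFinset_card']
      congr 1
    rw [h2, hH'']
    exact aux_deg_eq (fun e' he' => hd _ (Finset.erase_subset _ _ he')) x
  have hdegnA : ∀ x, x ∉ A → K.degree x = 0 := by
    intro x hx
    rw [← card_neighborFinset_eq_degree, Finset.card_eq_zero]
    ext y
    rw [mem_neighborFinset]
    simp only [Finset.notMem_empty, iff_false]
    rintro ⟨-, h2, -⟩
    exact hx h2
  have hodd : Finset.univ.filter (fun x => Odd (K.degree x)) = {u} := by
    ext x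
    simp only [Finset.mem_filter, Finset.mem_univ, true_and, Finset.mem_singleton]
    constructor
    · intro hoddx
      by_contra hxu
      by_cases hxA : x ∈ A
      · have hxv : x ≠ v := fun h => hvA (h ▸ hxA)
        have : (F.erase s(u, v)).filter (fun e => x ∈ e) = F.filter (fun e => x ∈ e) := by
          ext e'
          simp only [Finset.mem_filter, Finset.mem_erase]
          constructor
          · rintro ⟨⟨-, h1⟩, h2⟩; exact ⟨h1, h2⟩
          · rintro ⟨h1, h2⟩
            refine ⟨⟨?_, h1⟩, h2⟩
            rintro rfl
            rw [Sym2.mem_iff] at h2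
            rcases h2 with h | h
            · exact hxu h
            · exact hxv h
        rw [hdegA x hxA, this] at hoddx
        exact (Nat.not_even_iff_odd.mpr hoddx) (heven x)
      · rw [hdegnA x hxA] at hoddx
        simp at hoddx
    · intro hxu
      rw [hxu, hdegA u huA]
      have hmem : s(u, v) ∈ F.filter (fun e => u ∈ e) :=
        Finset.mem_filter.mpr ⟨he, Sym2.mem_iff.mpr (Or.inl rfl)⟩
      have : (F.erase s(u, v)).filter (fun e => u ∈ e)
          = (F.filter (fun e => u ∈ e)).erase s(u, v) := by
        ext e'
        simp only [Finset.mem_filter, Finset.mem_erase]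
        tauto
      rw [this, Finset.card_erase_of_mem hmem]
      have hev := heven u
      have hpos : 0 < (F.filter (fun e => u ∈ e)).card := Finset.card_pos.mpr ⟨_, hmem⟩
      rcases hev with ⟨c, hc⟩
      rw [hc]
      refine ⟨c - 1, by omega⟩
  have heven2 := K.even_card_odd_degree_vertices
  rw [hodd] at heven2
  simp at heven2

end Aux

/-- A simple graph on `n ≥ 2k+1` vertices all of whose cycles
have length exactly `2k+1` (with `k ≥ 1`) has at most `⌊(n-1)/(2k)⌋`
cycles. -/
theorem stmt_12 {V : Type*} [Fintype V] [DecidableEq V] (G : SimpleGraph V)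
    (k n : ℕ) (hk : 1 ≤ k) (hn : Fintype.card V = n) (hnk : 2 * k + 1 ≤ n)
    (hcyc : ∀ s len, IsCycleEdges G s len → len = 2 * k + 1) :
    {s : Finset (Sym2 V) | ∃ len, IsCycleEdges G s len}.ncard
      ≤ (n - 1) / (2 * k) := by
  classical
  haveI hVne : Nonempty V := by
    rw [← Fintype.card_pos_iff]
    omega
  set S : Set (Finset (Sym2 V)) := {s | ∃ len, IsCycleEdges G s len} with hS
  have hfin : S.Finite := Set.toFinite S
  set T : Finset (Finset (Sym2 V)) := hfin.toFinset with hT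
  have hmemT : ∀ C, C ∈ T ↔ ∃ len, IsCycleEdges G C len := by
    intro C
    rw [hT, Set.Finite.mem_toFinset]
    rfl
  have hC_cycle : ∀ C ∈ T, IsCycleEdges G C (2 * k + 1) := by
    intro C hC
    obtain ⟨len, hlen⟩ := (hmemT C).mp hC
    have := hcyc _ _ hlen
    rwa [this] at hlen
  have hCcard : ∀ C ∈ T, C.card = 2 * k + 1 := by
    intro C hC
    exact aux_isCycleEdges_card (hC_cycle C hC)
  have hCsub : ∀ C ∈ T, ∀ e ∈ C, e ∈ G.edgeSet := by
    intro C hC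
    exact aux_isCycleEdges_mem_edgeSet (hC_cycle C hC)
  -- all cycles' edge sets use only non-diagonal edges
  have hCd : ∀ C ∈ T, ∀ e ∈ C, ¬e.IsDiag := by
    intro C hC e he
    exact G.not_isDiag_of_mem_edgeSet (hCsub C hC e he)
  -- divisibility lemma : an "even" edge finset has size divisible by 2k+1
  have even_dvd : ∀ N (F : Finset (Sym2 V)), F.card ≤ N → (∀ e ∈ F, e ∈ G.edgeSet) →
      (∀ v, Even ((F.filter (fun e => v ∈ e)).card)) → (2 * k + 1) ∣ F.card := by
    intro N
    induction N with
    | zero =>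
      intro F hFN _ _
      have : F.card = 0 := by omega
      rw [this]
      exact Dvd.intro 0 rfl
    | succ N ih =>
      intro F hFN hFG heven
      rcases F.eq_empty_or_nonempty with rfl | hFne
      · simp
      · have hd : ∀ e ∈ F, ¬e.IsDiag := fun e he => G.not_isDiag_of_mem_edgeSet (hFG e he)
        have hnacyc := aux_even_not_acyclic hd hFne heven
        rw [IsAcyclic] at hnacyc
        push_neg at hnacyc
        obtain ⟨w, c, hc⟩ := hnacyc
        have h1 := aux_isCycle_isCycleEdges hc
        have hle : fromEdgeSet (↑F : Set (Sym2 V)) ≤ G := by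
          have := fromEdgeSet_mono (s := (↑F : Set (Sym2 V))) (t := G.edgeSet)
            (fun e he => hFG e he)
          rwa [fromEdgeSet_edgeSet] at this
        have h2 := aux_isCycleEdges_mono hle h1
        have hlen := hcyc _ _ h2
        set Z : Finset (Sym2 V) := c.edges.toFinset with hZ
        have hZcard : Z.card = 2 * k + 1 := by
          rw [aux_isCycleEdges_card h2, hlen]
        have hZsub : Z ⊆ F := by
          intro e heZ
          have := aux_isCycleEdges_mem_edgeSet h1 e heZ
          rw [edgeSet_fromEdgeSet] at this
          exact this.1
        have hZeven := aux_isCycleEdges_even_deg h2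
        set F' : Finset (Sym2 V) := F \ Z with hF'
        have hF'card : F'.card = F.card - (2 * k + 1) := by
          rw [hF', Finset.card_sdiff_of_subset hZsub, hZcard]
        have hZleF : Z.card ≤ F.card := Finset.card_le_card hZsub
        have hF'even : ∀ v, Even ((F'.filter (fun e => v ∈ e)).card) := by
          intro v
          have hff : F'.filter (fun e => v ∈ e)
              = (F.filter (fun e => v ∈ e)) \ (Z.filter (fun e => v ∈ e)) := by
            ext e'
            simp only [Finset.mem_filter, Finset.mem_sdiff, hF']
            tauto
          have hsub2 : Z.filter (fun e => v ∈ e) ⊆ F.filter (fun e => v ∈ e) :=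
            Finset.filter_subset_filter _ hZsub
          rw [hff, Finset.card_sdiff_of_subset hsub2]
          exact (Nat.even_sub (Finset.card_le_card hsub2)).mpr
            (by simp [heven v, hZeven v])
        have hF'dvd := ih F' (by omega) (fun e he => hFG e (Finset.sdiff_subset he)) hF'even
        obtain ⟨d, hd'⟩ := hF'dvd
        have h5 : F.card = (2 * k + 1) * d + (2 * k + 1) := by omega
        rw [h5]
        exact Dvd.intro (d + 1) (by ring)
  -- pairwise disjointness of distinct cycle edge sets
  have hdisj : ∀ C ∈ T, ∀ D ∈ T, C ≠ D → Disjoint C D := by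
    intro C hC D hD hne2
    set Δ : Finset (Sym2 V) := (C ∪ D) \ (C ∩ D) with hΔ
    have hΔsub : ∀ e ∈ Δ, e ∈ G.edgeSet := by
      intro e he
      rw [hΔ, Finset.mem_sdiff, Finset.mem_union] at he
      rcases he.1 with h | h
      · exact hCsub C hC e h
      · exact hCsub D hD e h
    have hΔeven : ∀ v, Even ((Δ.filter (fun e => v ∈ e)).card) := by
      intro v
      have hff : Δ.filter (fun e => v ∈ e)
          = ((C ∪ D).filter (fun e => v ∈ e)) \ ((C ∩ D).filter (fun e => v ∈ e)) := by
        ext e'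
        simp only [Finset.mem_filter, Finset.mem_sdiff, hΔ]
        tauto
      have hsub2 : (C ∩ D).filter (fun e => v ∈ e) ⊆ (C ∪ D).filter (fun e => v ∈ e) :=
        Finset.filter_subset_filter _ (Finset.inter_subset_union)
      rw [hff, Finset.card_sdiff_of_subset hsub2]
      apply (Nat.even_sub (Finset.card_le_card hsub2)).mpr
      apply Nat.even_add.mp
      have hcui : ((C ∪ D).filter (fun e => v ∈ e)).card
          + ((C ∩ D).filter (fun e => v ∈ e)).card
          = (C.filter (fun e => v ∈ e)).card + (D.filter (fun e => v ∈ e)).card := by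
        rw [Finset.filter_union, Finset.filter_inter_distrib]
        exact Finset.card_union_add_card_inter _ _
      rw [hcui]
      exact (aux_isCycleEdges_even_deg (hC_cycle C hC) v).add
        (aux_isCycleEdges_even_deg (hC_cycle D hD) v)
    have hdvd := even_dvd Δ.card Δ le_rfl hΔsub hΔeven
    obtain ⟨d, hd'⟩ := hdvd
    have hcu : (C ∪ D).card + (C ∩ D).card = C.card + D.card :=
      Finset.card_union_add_card_inter C D
    have hΔc : Δ.card = (C ∪ D).card - (C ∩ D).card :=
      Finset.card_sdiff_of_subset (Finset.inter_subset_union)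
    have hle2 : (C ∩ D).card ≤ (C ∪ D).card := Finset.card_le_card Finset.inter_subset_union
    have hCc := hCcard C hC
    have hDc := hCcard D hD
    rcases Nat.lt_or_ge d 3 with hd3 | hd3
    · interval_cases d
      · -- Δ empty : C = D, contradiction
        exfalso
        apply hne2
        have hΔ0 : Δ = ∅ := Finset.card_eq_zero.mp (by omega)
        have hsub3 : C ∪ D ⊆ C ∩ D := by
          intro e he
          by_contra hnot
          have : e ∈ Δ := Finset.mem_sdiff.mpr ⟨he, hnot⟩
          rw [hΔ0] at this
          exact absurd this (Finset.notMem_empty e)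
        ext e
        constructor
        · intro heC
          exact (Finset.mem_inter.mp (hsub3 (Finset.mem_union_left _ heC))).2
        · intro heD
          exact (Finset.mem_inter.mp (hsub3 (Finset.mem_union_right _ heD))).1
      · omega
      · -- C ∩ D empty : disjoint
        rw [Finset.disjoint_iff_inter_eq_empty]
        apply Finset.card_eq_zero.mp
        omega
    · exfalso
      have h6 : (2 * k + 1) * 3 ≤ (2 * k + 1) * d := Nat.mul_le_mul_left _ hd3
      rw [← hd'] at h6
      have h7 : (2 * k + 1) * 3 = 6 * k + 3 := by ring
      omega
  -- assemble : remove one edge from each cycle, the rest is acyclic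
  set E0 : Finset (Sym2 V) := T.biUnion (fun x => x) with hE0
  have hE0card : E0.card = T.card * (2 * k + 1) := by
    rw [hE0, Finset.card_biUnion hdisj]
    exact Finset.sum_const_nat (fun C hC => hCcard C hC)
  set pick : Finset (Sym2 V) → Sym2 V :=
    fun C => if h : C.Nonempty then h.choose else s(Classical.arbitrary V, Classical.arbitrary V)
    with hpickdef
  have hpick : ∀ C ∈ T, pick C ∈ C := by
    intro C hC
    have hCne : C.Nonempty := by
      apply Finset.card_pos.mp
      rw [hCcard C hC]
      omega
    rw [hpickdef]
    simp only [dif_pos hCne]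
    exact hCne.choose_spec
  set R : Finset (Sym2 V) := T.image pick with hR
  have hRcard : R.card ≤ T.card := Finset.card_image_le
  set F : Finset (Sym2 V) := E0 \ R with hF
  have hFsub : ∀ e ∈ F, e ∈ G.edgeSet := by
    intro e he
    rw [hF, Finset.mem_sdiff] at he
    obtain ⟨C, hC, heC⟩ := Finset.mem_biUnion.mp he.1
    exact hCsub C hC e heC
  have hFd : ∀ e ∈ F, ¬e.IsDiag := fun e he => G.not_isDiag_of_mem_edgeSet (hFsub e he)
  have hacyc : (fromEdgeSet (↑F : Set (Sym2 V))).IsAcyclic := by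
    intro w c hc
    have h1 := aux_isCycle_isCycleEdges hc
    have hle : fromEdgeSet (↑F : Set (Sym2 V)) ≤ G := by
      have := fromEdgeSet_mono (s := (↑F : Set (Sym2 V))) (t := G.edgeSet)
        (fun e he => hFsub e he)
      rwa [fromEdgeSet_edgeSet] at this
    have h2 := aux_isCycleEdges_mono hle h1
    have hZT : c.edges.toFinset ∈ T := (hmemT _).mpr ⟨c.length, h2⟩
    have hZF : c.edges.toFinset ⊆ F := by
      intro e heZ
      have := aux_isCycleEdges_mem_edgeSet h1 e heZ
      rw [edgeSet_fromEdgeSet] at this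
      exact this.1
    have hpickZ := hpick _ hZT
    have hpickR : pick c.edges.toFinset ∈ R := Finset.mem_image_of_mem pick hZT
    have h9 : pick c.edges.toFinset ∈ E0 \ R := hZF hpickZ
    rw [Finset.mem_sdiff] at h9
    exact h9.2 hpickR
  have hedge : (fromEdgeSet (↑F : Set (Sym2 V))).edgeSet = (↑F : Set (Sym2 V)) := by
    rw [edgeSet_fromEdgeSet]
    ext e
    simp only [Set.mem_diff, Finset.mem_coe, Set.mem_setOf_eq]
    exact ⟨fun h => h.1, fun h => ⟨h, hFd e h⟩⟩
  have hbound := aux_acyclic_ncard hacyc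
  rw [hedge, Set.ncard_coe_finset] at hbound
  have hFcard : E0.card - R.card ≤ F.card := Finset.le_card_sdiff R E0
  have hE0' : E0.card = 2 * k * T.card + T.card := by
    rw [hE0card]; ring
  have hfinal : 2 * k * T.card ≤ n - 1 := by
    rw [hn] at hbound
    omega
  have hncardT : S.ncard = T.card := Set.ncard_eq_toFinset_card S hfin
  rw [hS] at hncardT
  rw [hncardT, Nat.le_div_iff_mul_le (by omega : 0 < 2 * k)]
  calc T.card * (2 * k) = 2 * k * T.card := by ring
  _ ≤ n - 1 := hfinal
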